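/- Assume (i) for every x ∈ dom h, φ(x) ≥ E[φ(w) + ⟨v, x − w⟩ − η], and (ii) E[φ(w) + (1/(2λ))‖w − z̄‖² − G − (1/(2λ))‖z − z̄‖²] ≤ ε. Then for every x ∈ dom h, E[ φ(w) + (1/(2λ))‖w − z̄‖² − φ(x) − (1/(2λ))‖x − z̄‖² + ((1+λμ)/(λ(2+λμ)))‖x − z‖² ] ≤ 2ε. -/

import Mathlib

open MeasureTheory
open scoped RealInnerProductSpace

lemma mid_norm_sq {d : ℕ} (u v : EuclideanSpace ℝ (Fin d)) :
    ‖(1/2:ℝ)•u + (1/2:ℝ)•v‖^2 = (1/2)*‖u‖^2 + (1/2)*‖v‖^2 - (1/4)*‖u-v‖^2 := by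
  have hp := parallelogram_law_with_norm ℝ u v
  have : (1/2:ℝ)•u + (1/2:ℝ)•v = (1/2:ℝ)•(u+v) := by module
  rw [this, norm_smul]
  simp only [Real.norm_eq_abs]
  rw [abs_of_pos (show (0:ℝ) < 1/2 by norm_num)]
  nlinarith [hp]

lemma claimC {d : ℕ} (lam μ : ℝ) (hlam : 0 < lam) (hμ : 0 < μ)
    (u dd : EuclideanSpace ℝ (Fin d)) :
    ((1 + lam*μ)/(lam*(2+lam*μ))/2) * ‖u‖^2 ≤
      (1/(2*lam)) * ‖u - (1/2:ℝ)•dd‖^2 + ((1+lam*μ)/(8*lam)) * ‖dd‖^2 := by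
  set κ : ℝ := 2/(2+lam*μ) with hκ
  have h2 : (0:ℝ) < 2 + lam*μ := by nlinarith
  have e1 : ‖u - (1/2:ℝ)•dd‖^2 = ‖u‖^2 - ⟪u, dd⟫ + (1/4)*‖dd‖^2 := by
    rw [norm_sub_sq_real, real_inner_smul_right, norm_smul]
    simp only [Real.norm_eq_abs]
    rw [abs_of_pos (show (0:ℝ) < 1/2 by norm_num)]
    ring
  have e2 : ‖dd - κ•u‖^2 = ‖dd‖^2 - 2*κ*⟪u, dd⟫ + κ^2*‖u‖^2 := by
    rw [norm_sub_sq_real, real_inner_smul_right, norm_smul, real_inner_comm]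
    simp only [Real.norm_eq_abs]
    rw [abs_of_pos (show (0:ℝ) < κ by positivity)]
    ring
  have key : (1/(2*lam)) * ‖u - (1/2:ℝ)•dd‖^2 + ((1+lam*μ)/(8*lam)) * ‖dd‖^2
      - ((1 + lam*μ)/(lam*(2+lam*μ))/2) * ‖u‖^2 = ((2+lam*μ)/(8*lam)) * ‖dd - κ•u‖^2 := by
    rw [e1, e2, hκ]
    field_simp
    ring
  have hpos : (0:ℝ) ≤ ((2+lam*μ)/(8*lam)) * ‖dd - κ•u‖^2 := by positivity
  linarith [key]

lemma midpoint_sc {d : ℕ} (f h : EuclideanSpace ℝ (Fin d) → ℝ) (μ lam : ℝ)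
    (hlam : 0 < lam) (s : Set (EuclideanSpace ℝ (Fin d)))
    (hsc : ConvexOn ℝ Set.univ (fun x => f x - μ / 2 * ‖x‖ ^ 2))
    (hconv : ConvexOn ℝ s h) (zbar : EuclideanSpace ℝ (Fin d))
    {a b : EuclideanSpace ℝ (Fin d)} (ha : a ∈ s) (hb : b ∈ s) :
    f ((1/2:ℝ)•a + (1/2:ℝ)•b) + h ((1/2:ℝ)•a + (1/2:ℝ)•b)
      + 1/(2*lam) * ‖((1/2:ℝ)•a + (1/2:ℝ)•b) - zbar‖^2 ≤
    (1/2)*(f a + h a + 1/(2*lam)*‖a - zbar‖^2)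
      + (1/2)*(f b + h b + 1/(2*lam)*‖b - zbar‖^2)
      - ((1+lam*μ)/(8*lam))*‖a-b‖^2 := by
  have h1 := hsc.2 (Set.mem_univ a) (Set.mem_univ b)
    (by norm_num : (0:ℝ) ≤ 1/2) (by norm_num : (0:ℝ) ≤ 1/2) (by norm_num)
  simp only at h1
  have h2 := hconv.2 ha hb
    (by norm_num : (0:ℝ) ≤ 1/2) (by norm_num : (0:ℝ) ≤ 1/2) (by norm_num)
  have n1 := mid_norm_sq a b
  rw [n1] at h1
  have n2 : ((1/2:ℝ)•a + (1/2:ℝ)•b) - zbar = (1/2:ℝ)•(a-zbar) + (1/2:ℝ)•(b-zbar) := by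
    module
  have n3 := mid_norm_sq (a-zbar) (b-zbar)
  have n4 : (a-zbar)-(b-zbar) = a - b := by module
  rw [n4] at n3
  have n5 : 1/(2*lam) * ‖((1/2:ℝ)•a + (1/2:ℝ)•b) - zbar‖^2
      = 1/(2*lam)*(1/2)*‖a-zbar‖^2 + 1/(2*lam)*(1/2)*‖b-zbar‖^2
        - 1/(8*lam)*‖a-b‖^2 := by
    rw [n2, n3]; field_simp; ring
  have hc' : ((1+lam*μ)/(8*lam))*‖a-b‖^2 = μ/8*‖a-b‖^2 + 1/(8*lam)*‖a-b‖^2 := by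
    field_simp; ring
  simp only [smul_eq_mul] at h1 h2
  rw [n5, hc']
  linarith [h1, h2]

lemma inner_ident {d : ℕ} (lam : ℝ) (hlam : 0 < lam)
    (zbar y zω : EuclideanSpace ℝ (Fin d)) :
    ⟪lam⁻¹ • (zbar - zω), y - zω⟫ =
      1/(2*lam)*‖y - zω‖^2 + 1/(2*lam)*‖zω - zbar‖^2 - 1/(2*lam)*‖y - zbar‖^2 := by
  have e : (y - zω) - (zbar - zω) = y - zbar := by module
  have e2 := norm_sub_sq_real (y - zω) (zbar - zω)
  rw [e] at e2
  rw [real_inner_smul_left, real_inner_comm]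
  have e3 : ‖zω - zbar‖ = ‖zbar - zω‖ := norm_sub_rev _ _
  rw [e3]
  have e4 : ⟪y - zω, zbar - zω⟫ = (‖y-zω‖^2 + ‖zbar-zω‖^2 - ‖y-zbar‖^2)/2 := by
    linarith [e2]
  rw [e4]
  ring
theorem stmt_13 {d : ℕ} {Ω : Type*} [MeasurableSpace Ω] (P : Measure Ω)
    [IsProbabilityMeasure P]
    (f : EuclideanSpace ℝ (Fin d) → ℝ) (hf : Differentiable ℝ f)
    (μ : ℝ) (hμ : 0 < μ)
    (hsc : ConvexOn ℝ Set.univ (fun x => f x - μ / 2 * ‖x‖ ^ 2))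
    (s : Set (EuclideanSpace ℝ (Fin d))) (hs : s.Nonempty) (hcl : IsClosed s)
    (hbd : Bornology.IsBounded s)
    (h : EuclideanSpace ℝ (Fin d) → ℝ) (hconv : ConvexOn ℝ s h)
    (hlsc : LowerSemicontinuousOn h s)
    (lam : ℝ) (hlam : 0 < lam) (zbar : EuclideanSpace ℝ (Fin d)) (hzbar : zbar ∈ s)
    (ε : ℝ) (hε : 0 < ε)
    (w z : Ω → EuclideanSpace ℝ (Fin d)) (G : Ω → ℝ)
    (hw_meas : AEStronglyMeasurable w P) (hz_meas : AEStronglyMeasurable z P)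
    (hws : ∀ᵐ ω ∂P, w ω ∈ s) (hzs : ∀ᵐ ω ∂P, z ω ∈ s)
    (hG_int : Integrable G P)
    (hφw_int : Integrable (fun ω => f (w ω) + h (w ω)) P)
    (hη_int : Integrable (fun ω =>
      (f (w ω) + h (w ω)) - G ω - ⟪lam⁻¹ • (zbar - z ω), w ω - z ω⟫) P)
    -- (i)
    (hyp1 : ∀ x ∈ s,
      ∫ ω, ((f (w ω) + h (w ω)) + ⟪lam⁻¹ • (zbar - z ω), x - w ω⟫ -
        ((f (w ω) + h (w ω)) - G ω - ⟪lam⁻¹ • (zbar - z ω), w ω - z ω⟫)) ∂P ≤ f x + h x)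
    -- (ii)
    (hyp2 : ∫ ω, ((f (w ω) + h (w ω)) + 1 / (2 * lam) * ‖w ω - zbar‖ ^ 2 - G ω -
      1 / (2 * lam) * ‖z ω - zbar‖ ^ 2) ∂P ≤ ε) :
    ∀ x ∈ s,
      ∫ ω, ((f (w ω) + h (w ω)) + 1 / (2 * lam) * ‖w ω - zbar‖ ^ 2 - (f x + h x) -
        1 / (2 * lam) * ‖x - zbar‖ ^ 2 +
        (1 + lam * μ) / (lam * (2 + lam * μ)) * ‖x - z ω‖ ^ 2) ∂P ≤ 2 * ε := by
  classical
  obtain ⟨C, hC⟩ := isBounded_iff_forall_norm_le.mp hbd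
  -- integrability helpers
  have hint_z : ∀ y : EuclideanSpace ℝ (Fin d), Integrable (fun ω => ‖y - z ω‖^2) P := by
    intro y
    refine Integrable.mono' (integrable_const ((‖y‖ + C)^2)) ?_ ?_
    · exact ((continuous_const.sub continuous_id).norm.pow 2).comp_aestronglyMeasurable hz_meas
    · filter_upwards [hzs] with ω hω
      have h1 : ‖y - z ω‖ ≤ ‖y‖ + C := (norm_sub_le _ _).trans (by linarith [hC _ hω])
      rw [Real.norm_eq_abs, abs_of_nonneg (by positivity)]
      exact pow_le_pow_left₀ (norm_nonneg _) h1 2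
  have hint_w : Integrable (fun ω => ‖w ω - zbar‖^2) P := by
    refine Integrable.mono' (integrable_const ((C + ‖zbar‖)^2)) ?_ ?_
    · exact ((continuous_id.sub continuous_const).norm.pow 2).comp_aestronglyMeasurable hw_meas
    · filter_upwards [hws] with ω hω
      have h1 : ‖w ω - zbar‖ ≤ C + ‖zbar‖ := (norm_sub_le _ _).trans (by linarith [hC _ hω])
      rw [Real.norm_eq_abs, abs_of_nonneg (by positivity)]
      exact pow_le_pow_left₀ (norm_nonneg _) h1 2
  have hint_zz : Integrable (fun ω => ‖z ω - zbar‖^2) P := by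
    have e : (fun ω => ‖z ω - zbar‖^2) = fun ω => ‖zbar - z ω‖^2 := by
      funext ω; rw [norm_sub_rev]
    rw [e]; exact hint_z zbar
  set m := ∫ ω, (G ω + 1/(2*lam) * ‖z ω - zbar‖^2) ∂P with hm
  have hmint : Integrable (fun ω => G ω + 1/(2*lam)*‖z ω - zbar‖^2) P :=
    hG_int.add (hint_zz.const_mul _)
  -- step B
  have hB : ∀ y ∈ s, m + 1/(2*lam) * ∫ ω, ‖y - z ω‖^2 ∂P
      ≤ f y + h y + 1/(2*lam)*‖y - zbar‖^2 := by
    intro y hy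
    have h1 := hyp1 y hy
    have e : (fun ω => ((f (w ω) + h (w ω)) + ⟪lam⁻¹ • (zbar - z ω), y - w ω⟫ -
        ((f (w ω) + h (w ω)) - G ω - ⟪lam⁻¹ • (zbar - z ω), w ω - z ω⟫)))
        = fun ω => ((G ω + 1/(2*lam)*‖z ω - zbar‖^2) + 1/(2*lam)*‖y - z ω‖^2)
          + (-(1/(2*lam)*‖y - zbar‖^2)) := by
      funext ω
      have i1 : ⟪lam⁻¹ • (zbar - z ω), y - w ω⟫ + ⟪lam⁻¹ • (zbar - z ω), w ω - z ω⟫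
          = ⟪lam⁻¹ • (zbar - z ω), y - z ω⟫ := by
        rw [← inner_add_right]
        congr 1
        module
      have i2 := inner_ident lam hlam zbar y (z ω)
      linarith [i1, i2]
    have i1 : Integrable (fun ω => (G ω + 1/(2*lam)*‖z ω - zbar‖^2) + 1/(2*lam)*‖y - z ω‖^2) P :=
      hmint.add ((hint_z y).const_mul _)
    have i2 : Integrable (fun ω => 1/(2*lam)*‖y - z ω‖^2) P := (hint_z y).const_mul _
    rw [e, integral_add i1 (integrable_const _),
      integral_add hmint i2, integral_const_mul, integral_const] at h1
    simp only [measure_univ, probReal_univ, ENNReal.toReal_one, smul_eq_mul, one_mul] at h1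
    linarith [h1]
  have hΦw_int : Integrable (fun ω => f (w ω) + h (w ω) + 1/(2*lam)*‖w ω - zbar‖^2) P :=
    hφw_int.add (hint_w.const_mul _)
  -- step (ii) rewritten
  have h5 : ∫ ω, (f (w ω) + h (w ω) + 1/(2*lam)*‖w ω - zbar‖^2) ∂P ≤ ε + m := by
    have e : (fun ω => ((f (w ω) + h (w ω)) + 1 / (2 * lam) * ‖w ω - zbar‖ ^ 2 - G ω -
        1 / (2 * lam) * ‖z ω - zbar‖ ^ 2))
        = fun ω => (f (w ω) + h (w ω) + 1/(2*lam)*‖w ω - zbar‖^2)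
          - (G ω + 1/(2*lam)*‖z ω - zbar‖^2) := by
      funext ω; ring
    rw [e, integral_sub hΦw_int hmint] at hyp2
    linarith [hyp2]
  intro x hx
  set c : ℝ := (1 + lam * μ) / (lam * (2 + lam * μ)) with hc
  set J := ∫ ω, ‖x - z ω‖^2 ∂P with hJdef
  -- key a.e. bound
  have hkey : ∀ᵐ ω ∂P, 2*m + c*J - (f x + h x + 1/(2*lam)*‖x - zbar‖^2)
      ≤ f (w ω) + h (w ω) + 1/(2*lam)*‖w ω - zbar‖^2 := by
    filter_upwards [hws] with ω hwω
    have hmid : (1/2:ℝ)•x + (1/2:ℝ)•(w ω) ∈ s :=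
      hconv.1 hx hwω (by norm_num) (by norm_num) (by norm_num)
    have h1 := hB _ hmid
    have h2 := midpoint_sc f h μ lam hlam s hsc hconv zbar hx hwω
    have h3 : (c/2)*J ≤ 1/(2*lam) * ∫ ω', ‖((1/2:ℝ)•x + (1/2:ℝ)•(w ω)) - z ω'‖^2 ∂P
        + ((1+lam*μ)/(8*lam))*‖x - w ω‖^2 := by
      have hpt : ∀ ω', (c/2)*‖x - z ω'‖^2
          ≤ 1/(2*lam)*‖((1/2:ℝ)•x + (1/2:ℝ)•(w ω)) - z ω'‖^2
            + ((1+lam*μ)/(8*lam))*‖x - w ω‖^2 := by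
        intro ω'
        have hcc := claimC lam μ hlam hμ (x - z ω') (x - w ω)
        have em : (x - z ω') - (1/2:ℝ)•(x - w ω) = ((1/2:ℝ)•x + (1/2:ℝ)•(w ω)) - z ω' := by
          module
        rw [em] at hcc
        rw [hc]
        exact hcc
      calc (c/2)*J = ∫ ω', (c/2)*‖x - z ω'‖^2 ∂P := by
            rw [integral_const_mul]
        _ ≤ ∫ ω', (1/(2*lam)*‖((1/2:ℝ)•x + (1/2:ℝ)•(w ω)) - z ω'‖^2
              + ((1+lam*μ)/(8*lam))*‖x - w ω‖^2) ∂P := by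
            refine integral_mono ((hint_z x).const_mul _)
              (((hint_z _).const_mul _).add (integrable_const _)) hpt
        _ = 1/(2*lam) * ∫ ω', ‖((1/2:ℝ)•x + (1/2:ℝ)•(w ω)) - z ω'‖^2 ∂P
              + ((1+lam*μ)/(8*lam))*‖x - w ω‖^2 := by
            rw [integral_add ((hint_z _).const_mul (1/(2*lam))) (integrable_const _),
              integral_const_mul, integral_const]
            simp
    linarith [h1, h2, h3]
  have hconst : 2*m + c*J - (f x + h x + 1/(2*lam)*‖x - zbar‖^2)
      ≤ ∫ ω, (f (w ω) + h (w ω) + 1/(2*lam)*‖w ω - zbar‖^2) ∂P := by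
    have h1 := integral_mono_ae (integrable_const _) hΦw_int hkey
    simpa using h1
  have hJ : c*J ≤ (f x + h x + 1/(2*lam)*‖x - zbar‖^2) - m + ε := by
    linarith [h5, hconst]
  have e : (fun ω => ((f (w ω) + h (w ω)) + 1 / (2 * lam) * ‖w ω - zbar‖ ^ 2 - (f x + h x) -
        1 / (2 * lam) * ‖x - zbar‖ ^ 2 + c * ‖x - z ω‖ ^ 2))
      = fun ω => ((f (w ω) + h (w ω) + 1/(2*lam)*‖w ω - zbar‖^2)
          + (-(f x + h x) - 1/(2*lam)*‖x - zbar‖^2)) + c*‖x - z ω‖^2 := by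
    funext ω; ring
  have i3 : Integrable (fun ω => (f (w ω) + h (w ω) + 1/(2*lam)*‖w ω - zbar‖^2)
      + (-(f x + h x) - 1/(2*lam)*‖x - zbar‖^2)) P := hΦw_int.add (integrable_const _)
  have i4 : Integrable (fun ω => c * ‖x - z ω‖^2) P := (hint_z x).const_mul c
  rw [e, integral_add i3 i4,
    integral_add hΦw_int (integrable_const _), integral_const_mul, integral_const]
  simp only [measure_univ, probReal_univ, ENNReal.toReal_one, smul_eq_mul, one_mul]
  linarith [h5, hJ]
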